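/- The polynomials S_n(q) = Σ_{k=0}^{⌊n/2⌋} (−1)^k q^{k(k−1)/2} q^{n−k} [n−k choose k]_q satisfy, for every integer n ≥ 2, the second-order recurrence S_n(q) = q^{⌊(n+2)/3⌋} S_{n−1}(q) − q^{⌊(2n+1)/3⌋} S_{n−2}(q) in the polynomial ring ℤ[q]. -/

import Mathlib

open Polynomial Finset

/-- The Gaussian (q-)binomial coefficient `[n choose k]_q ∈ ℤ[q]`, defined through the
q-Pascal recurrence `[n+1 choose k+1] = [n choose k] + q^{k+1} [n choose k+1]`. -/
noncomputable def qBinom : ℕ → ℕ → Polynomial ℤ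
  | _, 0 => 1
  | 0, _ + 1 => 0
  | n + 1, k + 1 => qBinom n k + Polynomial.X ^ (k + 1) * qBinom n (k + 1)

lemma qBinom_zero_right (n : ℕ) : qBinom n 0 = 1 := by cases n <;> rfl

lemma qBinom_succ_succ (n k : ℕ) :
    qBinom (n + 1) (k + 1) = qBinom n k + X ^ (k + 1) * qBinom n (k + 1) := rfl

lemma qBinom_eq_zero {n k : ℕ} (h : n < k) : qBinom n k = 0 := by
  induction n generalizing k with
  | zero => cases k with
    | zero => omega
    | succ k => rfl
  | succ n ih =>
    cases k with
    | zero => omega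
    | succ k =>
      rw [qBinom_succ_succ, ih (by omega), ih (by omega)]
      ring

/-- The second q-Pascal rule. -/
lemma qBinom_pascal' (n k : ℕ) :
    qBinom (n + 1) (k + 1) = X ^ (n - k) * qBinom n k + qBinom n (k + 1) := by
  induction n generalizing k with
  | zero =>
    cases k with
    | zero =>
      simp [qBinom_succ_succ, qBinom_zero_right, qBinom_eq_zero (show (0:ℕ) < 1 by omega)]
    | succ k =>
      rw [qBinom_eq_zero (show 1 < k + 2 by omega),
        qBinom_eq_zero (show 0 < k + 1 by omega),
        qBinom_eq_zero (show 0 < k + 2 by omega)]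
      ring
  | succ n ih =>
    rcases le_or_gt k n with hk | hk
    · -- main case k ≤ n
      have hE : qBinom (n + 1) k + X ^ (n + 1) * qBinom n k
          = X ^ (n + 1 - k) * qBinom (n + 1) k + qBinom n k := by
        cases k with
        | zero => simp [qBinom_zero_right]; ring
        | succ k' =>
          have hk' : k' ≤ n := by omega
          have h1 : n + 1 - (k' + 1) = n - k' := by omega
          have hfac : (X : Polynomial ℤ) ^ (n + 1) * qBinom n (k' + 1)
              = X ^ (n - k') * (X ^ (k' + 1) * qBinom n (k' + 1)) := by
            rw [← mul_assoc, ← pow_add]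
            congr 2
            omega
          rw [h1, hfac]
          linear_combination ih k' - (X : Polynomial ℤ) ^ (n - k') * qBinom_succ_succ n k'
      have hfac2 : (X : Polynomial ℤ) ^ (k + 1) * (X ^ (n - k) * qBinom n k)
          = X ^ (n + 1) * qBinom n k := by
        rw [← mul_assoc, ← pow_add]
        congr 2
        omega
      rw [qBinom_succ_succ, ih k]
      have h2 : n + 1 - k = n + 1 - k := rfl
      -- goal: qBinom (n+1) k + X^(k+1) * (X^(n-k) qBinom n k + qBinom n (k+1))
      --     = X^(n+1-k) * qBinom (n+1) k + (X^(n-k) qBinom n k + qBinom n (k+1))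
      linear_combination hE + hfac2 - qBinom_succ_succ n k + ih k
    · -- k ≥ n + 1
      rcases eq_or_lt_of_le (show n + 1 ≤ k from hk) with hk1 | hk1
      · subst hk1
        have hmm : ∀ m, qBinom m m = 1 := by
          intro m
          induction m with
          | zero => rfl
          | succ m ihm => rw [qBinom_succ_succ, ihm, qBinom_eq_zero (by omega)]; ring
        rw [show qBinom (n + 1 + 1) (n + 1 + 1) = 1 from hmm _,
          show qBinom (n + 1) (n + 1) = 1 from hmm _,
          show qBinom (n + 1) (n + 1 + 1) = 0 from qBinom_eq_zero (by omega)]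
        simp
      · rw [show qBinom (n + 1 + 1) (k + 1) = 0 from qBinom_eq_zero (by omega),
          show qBinom (n + 1) k = 0 from qBinom_eq_zero (by omega),
          show qBinom (n + 1) (k + 1) = 0 from qBinom_eq_zero (by omega)]
        ring

/-- Generic reindexing lemma: applying the first q-Pascal rule inside the alternating sum. -/
lemma sum_pascal1 (m : ℕ) (hm : 2 ≤ m) (f g h : ℕ → ℕ)
    (hg : ∀ k, k ≤ (m - 1) / 2 → g k = f k + k)
    (hh : ∀ k, k ≤ (m - 2) / 2 → h k = f (k + 1)) :
    ∑ k ∈ range (m / 2 + 1), ((-1) ^ k * X ^ (f k) * qBinom (m - k) k : Polynomial ℤ)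
      = ∑ k ∈ range ((m - 1) / 2 + 1), (-1) ^ k * X ^ (g k) * qBinom (m - 1 - k) k
        - ∑ k ∈ range ((m - 2) / 2 + 1), (-1) ^ k * X ^ (h k) * qBinom (m - 2 - k) k := by
  have hr2 : (m - 2) / 2 + 1 = m / 2 := by omega
  rw [Finset.sum_range_succ' _ (m / 2), Finset.sum_range_succ' _ ((m - 1) / 2)]
  have hsplit : ∀ i ∈ range (m / 2),
      ((-1) ^ (i + 1) * X ^ (f (i + 1)) * qBinom (m - (i + 1)) (i + 1) : Polynomial ℤ)
        = (-1) ^ (i + 1) * X ^ (f (i + 1) + (i + 1)) * qBinom (m - 1 - (i + 1)) (i + 1)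
          - (-1) ^ i * X ^ (f (i + 1)) * qBinom (m - 2 - i) i := by
    intro i hi
    simp only [Finset.mem_range] at hi
    have h1 : m - (i + 1) = (m - 2 - i) + 1 := by omega
    have h2 : m - 1 - (i + 1) = m - 2 - i := by omega
    rw [h1, qBinom_succ_succ, h2, pow_add, pow_succ]
    ring
  rw [Finset.sum_congr rfl hsplit, Finset.sum_sub_distrib]
  have hsub : range ((m - 1) / 2) ⊆ range (m / 2) := Finset.range_subset_range.mpr (by omega)
  have hVV : ∑ i ∈ range ((m - 1) / 2),
        ((-1) ^ (i + 1) * X ^ (g (i + 1)) * qBinom (m - 1 - (i + 1)) (i + 1) : Polynomial ℤ)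
      = ∑ i ∈ range (m / 2),
        (-1) ^ (i + 1) * X ^ (f (i + 1) + (i + 1)) * qBinom (m - 1 - (i + 1)) (i + 1) := by
    rw [Finset.sum_congr rfl (fun i hi => by
      simp only [Finset.mem_range] at hi
      rw [hg (i + 1) (by omega)])]
    apply Finset.sum_subset hsub
    intro i hi hni
    simp only [Finset.mem_range] at hi hni
    rw [qBinom_eq_zero (show m - 1 - (i + 1) < i + 1 by omega), mul_zero]
  have hWW : ∑ k ∈ range ((m - 2) / 2 + 1),
        ((-1) ^ k * X ^ (h k) * qBinom (m - 2 - k) k : Polynomial ℤ)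
      = ∑ i ∈ range (m / 2), (-1) ^ i * X ^ (f (i + 1)) * qBinom (m - 2 - i) i := by
    rw [← hr2]
    apply Finset.sum_congr rfl
    intro k hk
    simp only [Finset.mem_range] at hk
    rw [hh k (by omega)]
  rw [hVV, hWW]
  simp only [qBinom_zero_right, pow_zero, one_mul, mul_one]
  rw [show g 0 = f 0 from by simpa using hg 0 (by omega)]
  ring

/-- Generic lemma: applying the second q-Pascal rule inside the alternating sum. -/
lemma sum_pascal2 (m : ℕ) (hm : 2 ≤ m) (f h : ℕ → ℕ)
    (hh : ∀ k, k ≤ (m - 2) / 2 → h k = f (k + 1) + (m - 2 * (k + 1))) :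
    ∑ k ∈ range (m / 2 + 1), ((-1) ^ k * X ^ (f k) * qBinom (m - k) k : Polynomial ℤ)
      = ∑ k ∈ range ((m - 1) / 2 + 1), (-1) ^ k * X ^ (f k) * qBinom (m - 1 - k) k
        - ∑ k ∈ range ((m - 2) / 2 + 1), (-1) ^ k * X ^ (h k) * qBinom (m - 2 - k) k := by
  have hr2 : (m - 2) / 2 + 1 = m / 2 := by omega
  rw [Finset.sum_range_succ' _ (m / 2), Finset.sum_range_succ' _ ((m - 1) / 2)]
  have hsplit : ∀ i ∈ range (m / 2),
      ((-1) ^ (i + 1) * X ^ (f (i + 1)) * qBinom (m - (i + 1)) (i + 1) : Polynomial ℤ)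
        = (-1) ^ (i + 1) * X ^ (f (i + 1)) * qBinom (m - 1 - (i + 1)) (i + 1)
          - (-1) ^ i * X ^ (f (i + 1) + (m - 2 * (i + 1))) * qBinom (m - 2 - i) i := by
    intro i hi
    simp only [Finset.mem_range] at hi
    have h1 : m - (i + 1) = (m - 2 - i) + 1 := by omega
    have h2 : m - 1 - (i + 1) = m - 2 - i := by omega
    have h3 : (m - 2 - i) - i = m - 2 * (i + 1) := by omega
    rw [h1, qBinom_pascal', h2, h3, pow_add]
    ring
  rw [Finset.sum_congr rfl hsplit, Finset.sum_sub_distrib]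
  have hsub : range ((m - 1) / 2) ⊆ range (m / 2) := Finset.range_subset_range.mpr (by omega)
  have hVV : ∑ i ∈ range ((m - 1) / 2),
        ((-1) ^ (i + 1) * X ^ (f (i + 1)) * qBinom (m - 1 - (i + 1)) (i + 1) : Polynomial ℤ)
      = ∑ i ∈ range (m / 2),
        (-1) ^ (i + 1) * X ^ (f (i + 1)) * qBinom (m - 1 - (i + 1)) (i + 1) := by
    apply Finset.sum_subset hsub
    intro i hi hni
    simp only [Finset.mem_range] at hi hni
    rw [qBinom_eq_zero (show m - 1 - (i + 1) < i + 1 by omega), mul_zero]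
  have hWW : ∑ k ∈ range ((m - 2) / 2 + 1),
        ((-1) ^ k * X ^ (h k) * qBinom (m - 2 - k) k : Polynomial ℤ)
      = ∑ i ∈ range (m / 2), (-1) ^ i * X ^ (f (i + 1) + (m - 2 * (i + 1))) * qBinom (m - 2 - i) i := by
    rw [← hr2]
    apply Finset.sum_congr rfl
    intro k hk
    simp only [Finset.mem_range] at hk
    rw [hh k (by omega)]
  rw [hVV, hWW]
  simp only [qBinom_zero_right, pow_zero, one_mul, mul_one]
  ring

/-- `S_n(q) = ∑_{k=0}^{⌊n/2⌋} (-1)^k q^{k(k-1)/2} q^{n-k} [n-k choose k]_q ∈ ℤ[q]`,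
the value of `S_n(a)` at `a = q`. -/
noncomputable def qBinomSumQ (n : ℕ) : Polynomial ℤ :=
  ∑ k ∈ Finset.range (n / 2 + 1),
    (-1) ^ k * Polynomial.X ^ (k * (k - 1) / 2) * Polynomial.X ^ (n - k) * qBinom (n - k) k

/-- `G0 m = ∑ (-1)^k q^{k(k-1)/2} [m-k choose k]`. -/
noncomputable def G0 (m : ℕ) : Polynomial ℤ :=
  ∑ k ∈ range (m / 2 + 1), (-1) ^ k * X ^ (k * (k - 1) / 2) * qBinom (m - k) k

/-- `G1 m = ∑ (-1)^k q^{k(k+1)/2} [m-k choose k]`. -/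
noncomputable def G1 (m : ℕ) : Polynomial ℤ :=
  ∑ k ∈ range (m / 2 + 1), (-1) ^ k * X ^ (k * (k + 1) / 2) * qBinom (m - k) k

lemma G0_rec (m : ℕ) (hm : 2 ≤ m) : G0 m = G1 (m - 1) - G1 (m - 2) := by
  unfold G0 G1
  refine sum_pascal1 m hm (fun k => k * (k - 1) / 2) (fun k => k * (k + 1) / 2)
    (fun k => k * (k + 1) / 2) (fun k _ => ?_) (fun k _ => ?_)
  · have hp : k * (k + 1) = k * (k - 1) + k * 2 := by
      cases k with
      | zero => rfl
      | succ t => simp [Nat.succ_sub_one]; ring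
    beta_reduce
    omega
  · beta_reduce
    simp only [Nat.add_sub_cancel]
    rw [Nat.mul_comm]

lemma G1_rec (m : ℕ) (hm : 2 ≤ m) : G1 m = G1 (m - 1) - X ^ (m - 1) * G0 (m - 2) := by
  unfold G0 G1
  rw [sum_pascal2 m hm (fun k => k * (k + 1) / 2) (fun k => (m - 1) + k * (k - 1) / 2)
    (fun k hk => ?_), Finset.mul_sum]
  · congr 1
    apply Finset.sum_congr rfl
    intro k _
    rw [pow_add]
    ring
  · have hp : (k + 1) * (k + 1 + 1) = k * (k - 1) + (2 * k + 1) * 2 := by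
      cases k with
      | zero => rfl
      | succ t => simp [Nat.succ_sub_one]; ring
    beta_reduce
    omega

lemma Sn_rec (n : ℕ) (hn : 2 ≤ n) :
    qBinomSumQ n = X ^ n * G0 (n - 1) - X ^ (n - 1) * G0 (n - 2) := by
  unfold qBinomSumQ G0
  rw [Finset.sum_congr rfl (fun k _ => show
      ((-1) ^ k * X ^ (k * (k - 1) / 2) * X ^ (n - k) * qBinom (n - k) k : Polynomial ℤ)
        = (-1) ^ k * X ^ (k * (k - 1) / 2 + (n - k)) * qBinom (n - k) k from by
    rw [pow_add]; ring)]
  rw [sum_pascal1 n hn (fun k => k * (k - 1) / 2 + (n - k)) (fun k => n + k * (k - 1) / 2)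
    (fun k => (n - 1) + k * (k - 1) / 2) (fun k hk => by beta_reduce; omega) (fun k hk => ?_),
    Finset.mul_sum, Finset.mul_sum]
  · congr 1
    · apply Finset.sum_congr rfl
      intro k _
      rw [pow_add]
      ring
    · apply Finset.sum_congr rfl
      intro k _
      rw [pow_add]
      ring
  · have hp : (k + 1) * (k + 1 - 1) = k * (k - 1) + k * 2 := by
      cases k with
      | zero => rfl
      | succ t => simp [Nat.succ_sub_one]; ring
    beta_reduce
    omega

lemma G0_rec3 (m : ℕ) (hm : 3 ≤ m) : G0 m = -(X ^ (m - 2) * G0 (m - 3)) := by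
  rw [G0_rec m (by omega), G1_rec (m - 1) (by omega),
    show m - 1 - 1 = m - 2 from by omega, show m - 1 - 2 = m - 3 from by omega]
  ring

lemma qBinom_one_one : qBinom 1 1 = 1 := by
  rw [show (1 : ℕ) = 0 + 1 from rfl, qBinom_succ_succ, qBinom_zero_right,
    qBinom_eq_zero (show 0 < 0 + 1 by omega)]
  ring

lemma G0_zero : G0 0 = 1 := by
  unfold G0
  norm_num [Finset.sum_range_one, qBinom_zero_right]

lemma G0_one : G0 1 = 1 := by
  unfold G0
  norm_num [Finset.sum_range_one, qBinom_zero_right]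

lemma G0_two : G0 2 = 0 := by
  unfold G0
  norm_num [Finset.sum_range_succ, Finset.sum_range_one, qBinom_zero_right, qBinom_one_one]

lemma G0_c2 (j : ℕ) : G0 (3 * j + 2) = 0 := by
  induction j with
  | zero => simpa using G0_two
  | succ i ih =>
    rw [show 3 * (i + 1) + 2 = 3 * i + 5 from by ring, G0_rec3 (3 * i + 5) (by omega),
      show 3 * i + 5 - 3 = 3 * i + 2 from by omega, ih]
    ring

lemma S_zero : qBinomSumQ 0 = 1 := by
  unfold qBinomSumQ
  norm_num [Finset.sum_range_one, qBinom_zero_right]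

lemma S_one : qBinomSumQ 1 = X := by
  unfold qBinomSumQ
  norm_num [Finset.sum_range_one, qBinom_zero_right]

/-- `P j = (3j² - j)/2`, the pentagonal exponent. -/
def Pe (j : ℕ) : ℕ := j * j + Nat.choose j 2

/-- `Q j = (3j² + j)/2`, the second pentagonal exponent. -/
def Qe (j : ℕ) : ℕ := j * j + Nat.choose (j + 1) 2

lemma choose_succ_two (j : ℕ) : Nat.choose (j + 1) 2 = Nat.choose j 2 + j := by
  induction j with
  | zero => rfl
  | succ i ih =>
    rw [Nat.choose_succ_succ (i+1) 1, Nat.choose_one_right]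
    simp only [show Nat.succ 1 = 2 from rfl]
    omega

lemma G0_c0' (j : ℕ) : G0 (3 * j) = (-1) ^ j * X ^ (Pe j) := by
  induction j with
  | zero => simpa [Pe] using G0_zero
  | succ i ih =>
    rw [show 3 * (i + 1) = 3 * i + 3 from by ring, G0_rec3 (3 * i + 3) (by omega),
      show 3 * i + 3 - 2 = 3 * i + 1 from by omega,
      show 3 * i + 3 - 3 = 3 * i from by omega, ih]
    have he : Pe (i + 1) = (3 * i + 1) + Pe i := by
      simp only [Pe, choose_succ_two, show (i + 1) * (i + 1) = i * i + 2 * i + 1 from by ring]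
      omega
    rw [he, pow_add, pow_succ]
    ring

lemma G0_c1' (j : ℕ) : G0 (3 * j + 1) = (-1) ^ j * X ^ (Qe j) := by
  induction j with
  | zero => simpa [Qe] using G0_one
  | succ i ih =>
    rw [show 3 * (i + 1) + 1 = 3 * i + 4 from by ring, G0_rec3 (3 * i + 4) (by omega),
      show 3 * i + 4 - 2 = 3 * i + 2 from by omega,
      show 3 * i + 4 - 3 = 3 * i + 1 from by omega, ih]
    have he : Qe (i + 1) = (3 * i + 2) + Qe i := by
      simp only [Qe, choose_succ_two, show (i + 1) * (i + 1) = i * i + 2 * i + 1 from by ring]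
      omega
    rw [he, pow_add, pow_succ]
    ring

lemma Sc0 (j : ℕ) : qBinomSumQ (3 * j) = (-1) ^ j * X ^ (Qe j) := by
  cases j with
  | zero => simpa [Qe] using S_zero
  | succ i =>
    rw [show 3 * (i + 1) = 3 * i + 3 from by ring, Sn_rec (3 * i + 3) (by omega),
      show 3 * i + 3 - 1 = 3 * i + 2 from by omega,
      show 3 * i + 3 - 2 = 3 * i + 1 from by omega, G0_c2 i, G0_c1' i]
    have hb : (X : Polynomial ℤ) ^ (3 * i + 2) * X ^ (Qe i) = X ^ (Qe (i + 1)) := by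
      rw [← pow_add]
      congr 1
      simp only [Qe, choose_succ_two, show (i + 1) * (i + 1) = i * i + 2 * i + 1 from by ring]
      omega
    linear_combination (-(-1 : Polynomial ℤ) ^ i) * hb

lemma Sc1 (j : ℕ) : qBinomSumQ (3 * j + 1) = (-1) ^ j * X ^ (Pe (j + 1)) := by
  cases j with
  | zero =>
    rw [show Pe (0 + 1) = 1 from by decide]
    simpa using S_one
  | succ i =>
    rw [show 3 * (i + 1) + 1 = 3 * i + 4 from by ring, Sn_rec (3 * i + 4) (by omega),
      show 3 * i + 4 - 1 = 3 * (i + 1) from by omega,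
      show 3 * i + 4 - 2 = 3 * i + 2 from by omega, G0_c0' (i + 1), G0_c2 i]
    have hb : (X : Polynomial ℤ) ^ (3 * i + 4) * X ^ (Pe (i + 1)) = X ^ (Pe (i + 1 + 1)) := by
      rw [← pow_add]
      congr 1
      simp only [Pe, choose_succ_two,
        show (i + 1 + 1) * (i + 1 + 1) = i * i + 4 * i + 4 from by ring,
        show (i + 1) * (i + 1) = i * i + 2 * i + 1 from by ring]
      omega
    linear_combination ((-1 : Polynomial ℤ) ^ (i + 1)) * hb

lemma Sc2 (j : ℕ) :
    qBinomSumQ (3 * j + 2) = (-1) ^ j * (X ^ (Qe (j + 1)) - X ^ (Pe (j + 1))) := by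
  rw [Sn_rec (3 * j + 2) (by omega),
    show 3 * j + 2 - 1 = 3 * j + 1 from by omega,
    show 3 * j + 2 - 2 = 3 * j from by omega, G0_c1' j, G0_c0' j]
  have hb1 : (X : Polynomial ℤ) ^ (3 * j + 2) * X ^ (Qe j) = X ^ (Qe (j + 1)) := by
    rw [← pow_add]
    congr 1
    simp only [Qe, choose_succ_two,
      show (j + 1) * (j + 1) = j * j + 2 * j + 1 from by ring]
    omega
  have hb2 : (X : Polynomial ℤ) ^ (3 * j + 1) * X ^ (Pe j) = X ^ (Pe (j + 1)) := by
    rw [← pow_add]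
    congr 1
    simp only [Pe, choose_succ_two,
      show (j + 1) * (j + 1) = j * j + 2 * j + 1 from by ring]
    omega
  linear_combination ((-1 : Polynomial ℤ) ^ j) * hb1 - ((-1 : Polynomial ℤ) ^ j) * hb2

/-- For every `n ≥ 2`, `S_n(q) = q^{⌊(n+2)/3⌋} S_{n-1}(q) - q^{⌊(2n+1)/3⌋} S_{n-2}(q)`
in `ℤ[q]`. -/
theorem qBinomSumQ_second_order_recurrence (n : ℕ) (hn : 2 ≤ n) :
    qBinomSumQ n =
      Polynomial.X ^ ((n + 2) / 3) * qBinomSumQ (n - 1)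
        - Polynomial.X ^ ((2 * n + 1) / 3) * qBinomSumQ (n - 2) := by
  obtain ⟨j, hj | hj | hj⟩ : ∃ j, n = 3 * j ∨ n = 3 * j + 1 ∨ n = 3 * j + 2 :=
    ⟨n / 3, by omega⟩
  · obtain ⟨i, rfl⟩ : ∃ i, j = i + 1 := ⟨j - 1, by omega⟩
    subst hj
    rw [show (3 * (i + 1) + 2) / 3 = i + 1 from by omega,
      show (2 * (3 * (i + 1)) + 1) / 3 = 2 * i + 2 from by omega,
      show 3 * (i + 1) - 1 = 3 * i + 2 from by omega,
      show 3 * (i + 1) - 2 = 3 * i + 1 from by omega,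
      Sc0 (i + 1), Sc2 i, Sc1 i]
    have b1 : (X : Polynomial ℤ) ^ (i + 1) * X ^ (Pe (i + 1)) = X ^ (Qe (i + 1)) := by
      rw [← pow_add]
      congr 1
      simp only [Pe, Qe, choose_succ_two]
      omega
    have b2 : (X : Polynomial ℤ) ^ (2 * i + 2) * X ^ (Pe (i + 1))
        = X ^ (i + 1) * X ^ (Qe (i + 1)) := by
      rw [← pow_add, ← pow_add]
      congr 1
      simp only [Pe, Qe, choose_succ_two]
      omega
    linear_combination ((-1 : Polynomial ℤ) ^ i) * b1 + ((-1 : Polynomial ℤ) ^ i) * b2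
  · obtain ⟨i, rfl⟩ : ∃ i, j = i + 1 := ⟨j - 1, by omega⟩
    subst hj
    rw [show (3 * (i + 1) + 1 + 2) / 3 = i + 2 from by omega,
      show (2 * (3 * (i + 1) + 1) + 1) / 3 = 2 * i + 3 from by omega,
      show 3 * (i + 1) + 1 - 1 = 3 * (i + 1) from by omega,
      show 3 * (i + 1) + 1 - 2 = 3 * i + 2 from by omega,
      Sc1 (i + 1), Sc0 (i + 1), Sc2 i]
    have b1 : (X : Polynomial ℤ) ^ (i + 2) * X ^ (Qe (i + 1))
        = X ^ (2 * i + 3) * X ^ (Pe (i + 1)) := by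
      rw [← pow_add, ← pow_add]
      congr 1
      simp only [Pe, Qe, choose_succ_two]
      omega
    have b2 : (X : Polynomial ℤ) ^ (2 * i + 3) * X ^ (Qe (i + 1)) = X ^ (Pe (i + 1 + 1)) := by
      rw [← pow_add]
      congr 1
      simp only [Pe, Qe, choose_succ_two,
        show (i + 1 + 1) * (i + 1 + 1) = (i + 1) * (i + 1) + 2 * i + 3 from by ring]
      omega
    linear_combination ((-1 : Polynomial ℤ) ^ i) * b1 + ((-1 : Polynomial ℤ) ^ i) * b2
  · subst hj
    rw [show (3 * j + 2 + 2) / 3 = j + 1 from by omega,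
      show (2 * (3 * j + 2) + 1) / 3 = 2 * j + 1 from by omega,
      show 3 * j + 2 - 1 = 3 * j + 1 from by omega,
      show 3 * j + 2 - 2 = 3 * j from by omega,
      Sc2 j, Sc1 j, Sc0 j]
    have b1 : (X : Polynomial ℤ) ^ (j + 1) * X ^ (Pe (j + 1)) = X ^ (Qe (j + 1)) := by
      rw [← pow_add]
      congr 1
      simp only [Pe, Qe, choose_succ_two]
      omega
    have b2 : (X : Polynomial ℤ) ^ (2 * j + 1) * X ^ (Qe j) = X ^ (Pe (j + 1)) := by
      rw [← pow_add]
      congr 1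
      simp only [Pe, Qe, choose_succ_two,
        show (j + 1) * (j + 1) = j * j + 2 * j + 1 from by ring]
      omega
    linear_combination (-((-1 : Polynomial ℤ) ^ j)) * b1 + ((-1 : Polynomial ℤ) ^ j) * b2
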